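/- Fix z ∈ ℕ and m ≥ 2^z. For every deterministic batched fractional algorithm B there exist a finite list of batches β_1, …, β_{m−2^z+1} of traces over Fin m, each of which has VC-dimension at least z with respect to 𝒮, and an index j* ∈ Fin m contained in every trace of every batch (so the offline optimum is 1), such that the unweighted cost of B on this list satisfies ∑_j B(list)_j ≥ H_{m − 2^z + 1}. -/

import Mathlib

/-- The `n`-th harmonic number `H_n = ∑_{k=1}^n 1/k` (with `H_0 = 0`). -/
noncomputable def harm (n : ℕ) : ℝ := ∑ k ∈ Finset.range n, (1 : ℝ) / (k + 1)

/-- A batch `β` of traces over `Fin m` has VC-dimension at least `z` with respect to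
the collection `𝒮 = {S_1, …, S_m}`: there is `B ⊆ β` with `|B| = z` such that for every
`U ⊆ B` there exists `j : Fin m` with `{T ∈ B : j ∈ T} = U`. -/
def VCge (m z : ℕ) (β : Finset (Finset (Fin m))) : Prop :=
  ∃ B ⊆ β, B.card = z ∧ ∀ U ⊆ B, ∃ j : Fin m, B.filter (fun T => j ∈ T) = U

namespace BRLB

variable {z m : ℕ}

noncomputable def eqv (z : ℕ) : Finset (Fin z) ≃ Fin (2 ^ z) :=
  Fintype.equivFinOfCardEq (by simp)

noncomputable def col (hm : 2 ^ z ≤ m) (U : Finset (Fin z)) : Fin m :=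
  ⟨m - 2 ^ z + (eqv z U).val, by have := (eqv z U).isLt; omega⟩

lemma col_inj (hm : 2 ^ z ≤ m) : Function.Injective (col hm) := by
  intro U V h
  apply (eqv z).injective
  apply Fin.val_injective
  have h2 := congrArg Fin.val h
  simp only [col] at h2
  exact Nat.add_left_cancel h2

lemma col_val_ge (hm : 2 ^ z ≤ m) (U : Finset (Fin z)) : m - 2 ^ z ≤ (col hm U).val := by
  simp [col]

noncomputable def free (hm : 2 ^ z ≤ m) : Finset (Fin m) :=
  (Finset.univ : Finset (Fin (m - 2 ^ z))).map (Fin.castLEEmb (Nat.sub_le m _))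

lemma mem_free (hm : 2 ^ z ≤ m) (j : Fin m) : j ∈ free hm ↔ j.val < m - 2 ^ z := by
  constructor
  · intro hj
    simp only [free, Finset.mem_map] at hj
    obtain ⟨i, -, rfl⟩ := hj
    simpa [Fin.castLEEmb, Fin.castLE] using i.isLt
  · intro hj
    simp only [free, Finset.mem_map]
    exact ⟨⟨j.val, hj⟩, Finset.mem_univ _, by ext; simp [Fin.castLEEmb, Fin.castLE]⟩

lemma col_not_mem_free (hm : 2 ^ z ≤ m) (U : Finset (Fin z)) : col hm U ∉ free hm := by
  rw [mem_free]; have := col_val_ge hm U; omega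

noncomputable def A0 (hm : 2 ^ z ≤ m) : Finset (Fin m) :=
  insert (col hm Finset.univ) (free hm)

lemma A0_card (hm : 2 ^ z ≤ m) : (A0 hm).card = m - 2 ^ z + 1 := by
  rw [A0, Finset.card_insert_of_notMem (col_not_mem_free hm _)]
  simp [free]

noncomputable def patt (hm : 2 ^ z ≤ m) (i : Fin z) : Finset (Fin m) :=
  (Finset.univ.filter (fun U : Finset (Fin z) => i ∈ U)).image (col hm)

noncomputable def trace (hm : 2 ^ z ≤ m) (A : Finset (Fin m)) (i : Fin z) : Finset (Fin m) :=
  A ∪ patt hm i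

lemma col_mem_trace (hm : 2 ^ z ≤ m) {A : Finset (Fin m)} (hA : A ⊆ A0 hm)
    (V : Finset (Fin z)) (i : Fin z) :
    col hm V ∈ trace hm A i ↔ i ∈ V := by
  constructor
  · intro h
    rcases Finset.mem_union.1 h with h | h
    · have h' := hA h
      rw [A0, Finset.mem_insert] at h'
      rcases h' with h' | h'
      · have hV : V = Finset.univ := col_inj hm h'
        subst hV; exact Finset.mem_univ i
      · exact absurd h' (col_not_mem_free hm V)
    · simp only [patt, Finset.mem_image, Finset.mem_filter] at h
      obtain ⟨U, ⟨-, hiU⟩, hUV⟩ := h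
      rwa [col_inj hm hUV] at hiU
  · intro h
    apply Finset.mem_union_right
    simp only [patt, Finset.mem_image, Finset.mem_filter]
    exact ⟨V, ⟨Finset.mem_univ _, h⟩, rfl⟩

lemma trace_inj (hm : 2 ^ z ≤ m) {A : Finset (Fin m)} (hA : A ⊆ A0 hm) :
    Function.Injective (trace hm A) := by
  intro i i' h
  have h1 : col hm {i} ∈ trace hm A i :=
    (col_mem_trace hm hA _ _).2 (Finset.mem_singleton_self i)
  rw [h] at h1
  exact (Finset.mem_singleton.1 ((col_mem_trace hm hA _ _).1 h1)).symm

noncomputable def batch (hm : 2 ^ z ≤ m) (A : Finset (Fin m)) : Finset (Finset (Fin m)) :=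
  insert A (Finset.univ.image (trace hm A))

lemma subset_of_mem_batch (hm : 2 ^ z ≤ m) {A T : Finset (Fin m)} (hT : T ∈ batch hm A) :
    A ⊆ T := by
  rcases Finset.mem_insert.1 hT with rfl | hT
  · exact Finset.Subset.refl _
  · obtain ⟨i, -, rfl⟩ := Finset.mem_image.1 hT
    exact Finset.subset_union_left

lemma batch_VC (hm : 2 ^ z ≤ m) {A : Finset (Fin m)} (hA : A ⊆ A0 hm) :
    VCge m z (batch hm A) := by
  refine ⟨Finset.univ.image (trace hm A), fun T hT => Finset.mem_insert_of_mem hT, ?_, ?_⟩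
  · rw [Finset.card_image_of_injective _ (trace_inj hm hA), Finset.card_univ, Fintype.card_fin]
  · intro U hU
    refine ⟨col hm (Finset.univ.filter fun i => trace hm A i ∈ U), ?_⟩
    ext T
    simp only [Finset.mem_filter, Finset.mem_image, Finset.mem_univ, true_and]
    constructor
    · rintro ⟨⟨i, rfl⟩, hcol⟩
      have hi := (col_mem_trace hm hA _ _).1 hcol
      exact (Finset.mem_filter.1 hi).2
    · intro hTU
      obtain ⟨i, -, rfl⟩ := Finset.mem_image.1 (hU hTU)
      exact ⟨⟨i, rfl⟩, (col_mem_trace hm hA _ _).2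
        (Finset.mem_filter.2 ⟨Finset.mem_univ _, hTU⟩)⟩


variable (hm : 2 ^ z ≤ m) (Alg : List (Finset (Finset (Fin m))) → Fin m → ℝ)

noncomputable def pick (L : List (Finset (Finset (Fin m)))) (A : Finset (Fin m)) : Fin m :=
  if h : A.Nonempty then (Finset.exists_max_image A (Alg L) h).choose
  else ⟨0, by have := Nat.one_le_two_pow (n := z); omega⟩

lemma pick_mem {L : List (Finset (Finset (Fin m)))} {A : Finset (Fin m)} (h : A.Nonempty) :
    pick hm Alg L A ∈ A := by
  rw [pick, dif_pos h]
  exact (Finset.exists_max_image A (Alg L) h).choose_spec.1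

lemma pick_max {L : List (Finset (Finset (Fin m)))} {A : Finset (Fin m)} (h : A.Nonempty) :
    ∀ j ∈ A, Alg L j ≤ Alg L (pick hm Alg L A) := by
  rw [pick, dif_pos h]
  exact (Finset.exists_max_image A (Alg L) h).choose_spec.2

noncomputable def state : ℕ → Finset (Fin m) × List (Finset (Finset (Fin m)))
  | 0 => (A0 hm, [])
  | t + 1 =>
    let p := state t
    let L' := p.2 ++ [batch hm p.1]
    (p.1.erase (pick hm Alg L' p.1), L')

noncomputable def jfun (t : ℕ) : Fin m :=
  pick hm Alg ((state hm Alg t).2 ++ [batch hm (state hm Alg t).1]) (state hm Alg t).1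

lemma state_succ_snd (t : ℕ) :
    (state hm Alg (t + 1)).2 = (state hm Alg t).2 ++ [batch hm (state hm Alg t).1] := rfl

lemma state_succ_fst (t : ℕ) :
    (state hm Alg (t + 1)).1 = ((state hm Alg t).1).erase (jfun hm Alg t) := rfl

lemma hist_eq (t : ℕ) :
    (state hm Alg t).2 = (List.range t).map (fun s => batch hm (state hm Alg s).1) := by
  induction t with
  | zero => rfl
  | succ t ih => rw [state_succ_snd, ih, List.range_succ]; simp

lemma hist_length (t : ℕ) : (state hm Alg t).2.length = t := by
  rw [hist_eq]; simp

lemma alive_subset_A0 (t : ℕ) : (state hm Alg t).1 ⊆ A0 hm := by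
  induction t with
  | zero => exact Finset.Subset.refl _
  | succ t ih => exact (Finset.erase_subset _ _).trans ih

lemma alive_anti {s t : ℕ} (h : s ≤ t) : (state hm Alg t).1 ⊆ (state hm Alg s).1 := by
  induction t, h using Nat.le_induction with
  | base => exact Finset.Subset.refl _
  | succ t hst ih => exact ((Finset.erase_subset _ _).trans ih)

lemma alive_card {t : ℕ} (ht : t ≤ m - 2 ^ z + 1) :
    (state hm Alg t).1.card = m - 2 ^ z + 1 - t := by
  induction t with
  | zero => simpa [state] using A0_card hm
  | succ t ih =>
    have ht' : t ≤ m - 2 ^ z + 1 := Nat.le_of_succ_le ht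
    have hcard := ih ht'
    have hne : (state hm Alg t).1.Nonempty := by
      rw [← Finset.card_pos, hcard]; omega
    rw [state_succ_fst, jfun, Finset.card_erase_of_mem (pick_mem hm Alg hne), hcard]
    omega

lemma alive_nonempty {t : ℕ} (ht : t < m - 2 ^ z + 1) : (state hm Alg t).1.Nonempty := by
  rw [← Finset.card_pos, alive_card hm Alg (le_of_lt ht)]; omega

lemma jfun_mem {t : ℕ} (ht : t < m - 2 ^ z + 1) : jfun hm Alg t ∈ (state hm Alg t).1 :=
  pick_mem hm Alg (alive_nonempty hm Alg ht)

lemma jfun_not_mem_succ (t : ℕ) : jfun hm Alg t ∉ (state hm Alg (t + 1)).1 := by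
  rw [state_succ_fst]; exact Finset.notMem_erase _ _

lemma hist_prefix {s t : ℕ} (h : s ≤ t) : (state hm Alg s).2 <+: (state hm Alg t).2 := by
  induction t, h using Nat.le_induction with
  | base => exact List.prefix_refl _
  | succ t hst ih =>
    rw [state_succ_snd]
    exact ih.trans (List.prefix_append _ _)

lemma traces_nonempty {t : ℕ} (ht : t ≤ m - 2 ^ z + 1) :
    ∀ β ∈ (state hm Alg t).2, ∀ T ∈ β, T.Nonempty := by
  intro β hβ T hT
  rw [hist_eq] at hβ
  obtain ⟨s, hs, rfl⟩ := List.mem_map.1 hβ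
  rw [List.mem_range] at hs
  have hne : (state hm Alg s).1.Nonempty := alive_nonempty hm Alg (by omega)
  exact hne.mono (subset_of_mem_batch hm hT)


lemma jfun_inj {s t : ℕ} (hs : s < t) (ht : t < m - 2 ^ z + 1) :
    jfun hm Alg s ≠ jfun hm Alg t := by
  intro h
  have h1 : jfun hm Alg t ∈ (state hm Alg t).1 := jfun_mem hm Alg ht
  have h2 : (state hm Alg t).1 ⊆ (state hm Alg (s + 1)).1 := alive_anti hm Alg (by omega)
  exact jfun_not_mem_succ hm Alg s (h ▸ h2 h1)

end BRLB

theorem batched_restricted_lower_bound (z m : ℕ) (hm : 2 ^ z ≤ m)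
    (Alg : List (Finset (Finset (Fin m))) → Fin m → ℝ)
    (hpos : ∀ L j, 0 ≤ Alg L j)
    (hmono : ∀ L L' : List (Finset (Finset (Fin m))), L <+: L' → ∀ j, Alg L j ≤ Alg L' j)
    (hfeas : ∀ L : List (Finset (Finset (Fin m))), (∀ β ∈ L, ∀ T ∈ β, T.Nonempty) →
      ∀ β ∈ L, ∀ T ∈ β, 1 ≤ ∑ j ∈ T, Alg L j) :
    ∃ (L : List (Finset (Finset (Fin m)))) (jstar : Fin m),
      L.length = m - 2 ^ z + 1 ∧
      (∀ β ∈ L, VCge m z β) ∧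
      (∀ β ∈ L, ∀ T ∈ β, jstar ∈ T) ∧
      harm (m - 2 ^ z + 1) ≤ ∑ j, Alg L j := by
  classical
  set n := m - 2 ^ z + 1 with hn
  have hn1 : 1 ≤ n := by omega
  refine ⟨(BRLB.state hm Alg n).2, BRLB.jfun hm Alg (n - 1), BRLB.hist_length hm Alg n, ?_, ?_, ?_⟩
  · intro β hβ
    rw [BRLB.hist_eq] at hβ
    obtain ⟨s, -, rfl⟩ := List.mem_map.1 hβ
    exact BRLB.batch_VC hm (BRLB.alive_subset_A0 hm Alg s)
  · intro β hβ T hT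
    rw [BRLB.hist_eq] at hβ
    obtain ⟨s, hs, rfl⟩ := List.mem_map.1 hβ
    rw [List.mem_range] at hs
    have hj : BRLB.jfun hm Alg (n - 1) ∈ (BRLB.state hm Alg (n - 1)).1 :=
      BRLB.jfun_mem hm Alg (by omega)
    have hsub : (BRLB.state hm Alg (n - 1)).1 ⊆ (BRLB.state hm Alg s).1 :=
      BRLB.alive_anti hm Alg (by omega)
    exact BRLB.subset_of_mem_batch hm hT (hsub hj)
  · -- cost bound
    have key : ∀ t ∈ Finset.range n,
        (1 : ℝ) / ((n - t : ℕ) : ℝ) ≤ Alg ((BRLB.state hm Alg n).2) (BRLB.jfun hm Alg t) := by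
      intro t ht
      rw [Finset.mem_range] at ht
      have hne : (BRLB.state hm Alg t).1.Nonempty := BRLB.alive_nonempty hm Alg ht
      have hb_mem : BRLB.batch hm (BRLB.state hm Alg t).1 ∈ (BRLB.state hm Alg (t + 1)).2 := by
        rw [BRLB.state_succ_snd]
        exact List.mem_append_right _ (List.mem_singleton_self _)
      have h1 : 1 ≤ ∑ j ∈ (BRLB.state hm Alg t).1, Alg ((BRLB.state hm Alg (t + 1)).2) j :=
        hfeas _ (BRLB.traces_nonempty hm Alg (by omega)) _ hb_mem _ (Finset.mem_insert_self _ _)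
      have h2 : ∑ j ∈ (BRLB.state hm Alg t).1, Alg ((BRLB.state hm Alg (t + 1)).2) j ≤
          (BRLB.state hm Alg t).1.card •
            Alg ((BRLB.state hm Alg (t + 1)).2) (BRLB.jfun hm Alg t) :=
        Finset.sum_le_card_nsmul _ _ _ (BRLB.pick_max hm Alg hne)
      have hcard : (BRLB.state hm Alg t).1.card = n - t := by
        rw [BRLB.alive_card hm Alg (le_of_lt ht)]
      have hpos' : (0 : ℝ) < ((n - t : ℕ) : ℝ) := by
        have : 0 < n - t := by omega
        exact_mod_cast this
      have h3 : (1 : ℝ) ≤ ((n - t : ℕ) : ℝ) *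
          Alg ((BRLB.state hm Alg (t + 1)).2) (BRLB.jfun hm Alg t) := by
        have := h1.trans h2
        rwa [hcard, nsmul_eq_mul] at this
      have h4 : (1 : ℝ) / ((n - t : ℕ) : ℝ) ≤
          Alg ((BRLB.state hm Alg (t + 1)).2) (BRLB.jfun hm Alg t) := by
        rw [div_le_iff₀ hpos']
        linarith [h3]
      exact h4.trans (hmono _ _ (BRLB.hist_prefix hm Alg (by omega)) _)
    have hharm : harm n = ∑ t ∈ Finset.range n, (1 : ℝ) / ((n - t : ℕ) : ℝ) := by
      rw [harm, ← Finset.sum_range_reflect (fun k => (1 : ℝ) / (k + 1)) n]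
      refine Finset.sum_congr rfl fun j hj => ?_
      rw [Finset.mem_range] at hj
      have hnat : (n - 1 - j) + 1 = n - j := by omega
      have hcast : ((n - 1 - j : ℕ) : ℝ) + 1 = ((n - j : ℕ) : ℝ) := by
        exact_mod_cast congrArg (Nat.cast : ℕ → ℝ) hnat
      rw [hcast]
    have hsum1 : ∑ t ∈ Finset.range n, (1 : ℝ) / ((n - t : ℕ) : ℝ) ≤
        ∑ t ∈ Finset.range n, Alg ((BRLB.state hm Alg n).2) (BRLB.jfun hm Alg t) :=
      Finset.sum_le_sum key
    have hsum2 : ∑ t ∈ Finset.range n, Alg ((BRLB.state hm Alg n).2) (BRLB.jfun hm Alg t) =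
        ∑ j ∈ (Finset.range n).image (BRLB.jfun hm Alg),
          Alg ((BRLB.state hm Alg n).2) j := by
      rw [Finset.sum_image]
      intro s hs t ht h
      rw [Finset.mem_coe, Finset.mem_range] at hs ht
      by_contra hne
      rcases Nat.lt_or_ge s t with hlt | hge
      · exact BRLB.jfun_inj hm Alg hlt ht h
      · have hlt : t < s := by omega
        exact BRLB.jfun_inj hm Alg hlt hs h.symm
    have hsum3 : ∑ j ∈ (Finset.range n).image (BRLB.jfun hm Alg),
        Alg ((BRLB.state hm Alg n).2) j ≤ ∑ j, Alg ((BRLB.state hm Alg n).2) j :=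
      Finset.sum_le_sum_of_subset_of_nonneg (Finset.subset_univ _)
        (fun j _ _ => hpos _ j)
    rw [hharm]
    exact hsum1.trans (hsum2 ▸ hsum3)
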